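/- Let X be a T1 space with X = S ∪ K where the set K is compact in X. (i) If X is completely regular and the subspace S of X is realcompact, then X is realcompact. (ii) If X is zero-dimensional and the subspace S of X is ℕ-compact, then X is ℕ-compact. -/

import Mathlib

open Topology TopologicalSpace Set Filter

universe u

/-- `X` is `E`-compact if it is homeomorphic to a closed subspace of a power `E^J`
for some nonempty index set `J`. -/
def IsECompact (E : Type*) (X : Type u)
    [TopologicalSpace E] [TopologicalSpace X] : Prop :=
  ∃ (J : Type u) (_ : Nonempty J) (e : X → J → E),
    IsEmbedding e ∧ IsClosed (Set.range e)


lemma mem_closure_pi_real {ι : Type*} {A : Set (ι → ℝ)} {q : ι → ℝ} :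
    q ∈ closure A ↔ ∀ (F : Finset ι) (ε : ℝ), 0 < ε → ∃ a ∈ A, ∀ j ∈ F, |a j - q j| < ε := by
  constructor
  · intro hq F ε hε
    have hU : IsOpen {r : ι → ℝ | ∀ j ∈ F, |r j - q j| < ε} := by
      have : {r : ι → ℝ | ∀ j ∈ F, |r j - q j| < ε} =
          ⋂ j ∈ F, (fun r : ι → ℝ => r j) ⁻¹' (Metric.ball (q j) ε) := by
        ext r; simp [Real.dist_eq]
      rw [this]
      exact isOpen_biInter_finset fun j _ =>
        (continuous_apply j).isOpen_preimage _ Metric.isOpen_ball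
    have hqU : q ∈ {r : ι → ℝ | ∀ j ∈ F, |r j - q j| < ε} := by
      intro j _; simpa using hε
    obtain ⟨a, haU, haA⟩ := _root_.mem_closure_iff.mp hq _ hU hqU
    exact ⟨a, haA, haU⟩
  · intro h
    rw [mem_closure_iff_nhds]
    intro U hU
    rw [nhds_pi, Filter.mem_pi'] at hU
    obtain ⟨F, t, ht, htU⟩ := hU
    have : ∀ j : ι, ∃ ε > 0, Metric.ball (q j) ε ⊆ t j := fun j =>
      Metric.mem_nhds_iff.mp (ht j)
    choose ε hε hball using this
    obtain ⟨ε₀, hε₀, hε₀le⟩ : ∃ ε₀ > 0, ∀ j ∈ F, ε₀ ≤ ε j := by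
      rcases F.eq_empty_or_nonempty with hF | hF
      · exact ⟨1, one_pos, by simp [hF]⟩
      · refine ⟨F.inf' hF ε, ?_, fun j hj => Finset.inf'_le ε hj⟩
        rw [gt_iff_lt, Finset.lt_inf'_iff]
        exact fun j _ => hε j
    obtain ⟨a, haA, ha⟩ := h F ε₀ hε₀
    refine ⟨a, ?_, haA⟩
    apply htU
    intro j hj
    apply hball j
    simp only [Metric.mem_ball, Real.dist_eq]
    exact lt_of_lt_of_le (ha j hj) (hε₀le j hj)

lemma mem_closure_pi_nat {ι : Type*} {A : Set (ι → ℕ)} {q : ι → ℕ} :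
    q ∈ closure A ↔ ∀ F : Finset ι, ∃ a ∈ A, ∀ j ∈ F, a j = q j := by
  constructor
  · intro hq F
    have hU : IsOpen {r : ι → ℕ | ∀ j ∈ F, r j = q j} := by
      have : {r : ι → ℕ | ∀ j ∈ F, r j = q j} =
          ⋂ j ∈ F, (fun r : ι → ℕ => r j) ⁻¹' {q j} := by ext r; simp
      rw [this]
      exact isOpen_biInter_finset fun j _ =>
        (continuous_apply j).isOpen_preimage _ (isOpen_discrete _)
    obtain ⟨a, haU, haA⟩ := _root_.mem_closure_iff.mp hq _ hU (fun j _ => rfl)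
    exact ⟨a, haA, haU⟩
  · intro h
    rw [mem_closure_iff_nhds]
    intro U hU
    rw [nhds_pi, Filter.mem_pi'] at hU
    obtain ⟨F, t, ht, htU⟩ := hU
    obtain ⟨a, haA, ha⟩ := h F
    refine ⟨a, ?_, haA⟩
    apply htU
    intro j hj
    have := ht j
    rw [nhds_discrete, Filter.mem_pure] at this
    simpa [ha j hj] using this

open scoped Classical in
lemma clopen_indicator {X : Type*} [TopologicalSpace X] {V : Set X} (hV : IsClopen V) :
    Continuous (fun z => if z ∈ V then (1:ℕ) else 0) := by
  have h : (fun z => if z ∈ V then (1:ℕ) else 0)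
      = (fun b : Bool => if b then 1 else 0) ∘ V.boolIndicator := by
    ext z; by_cases h : z ∈ V <;> simp [Set.boolIndicator, h]
  rw [h]
  exact continuous_of_discreteTopology.comp
    ((continuous_boolIndicator_iff_isClopen V).mpr hV)

lemma part_nat {X : Type u} [TopologicalSpace X] [T1Space X]
    (S K : Set X) (hUnion : S ∪ K = Set.univ) (hK : IsCompact K)
    (hzd : IsTopologicalBasis {s : Set X | IsClopen s}) (hS : IsECompact ℕ ↥S) :
    IsECompact ℕ X := by
  classical
  set e : X → C(X, ℕ) → ℕ := fun x f => f x with he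
  have hcont : Continuous e := continuous_pi fun f => f.continuous
  have basis : ∀ (x : X) (U : Set X), IsOpen U → x ∈ U →
      ∃ V : Set X, IsClopen V ∧ x ∈ V ∧ V ⊆ U := by
    intro x U hU hxU
    obtain ⟨V, hV, hxV, hVU⟩ := hzd.exists_subset_of_mem_open hxU hU
    exact ⟨V, hV, hxV, hVU⟩
  have hemb : IsEmbedding e := by
    refine IsEmbedding.mk' e ?_ ?_
    · intro x y hxy
      by_contra hne
      obtain ⟨V, hV, hxV, hVU⟩ := basis x {y}ᶜ (isClosed_singleton.isOpen_compl)
        (by simpa using hne)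
      set χ : C(X, ℕ) := ⟨fun z => if z ∈ V then 1 else 0, clopen_indicator hV⟩
      have h1 : e x χ = 1 := by simp [he, χ, hxV]
      have h2 : e y χ = 0 := by
        have : y ∉ V := fun hy => (hVU hy) rfl
        simp [he, χ, this]
      rw [hxy] at h1
      rw [h1] at h2
      exact Nat.one_ne_zero h2
    · intro x
      refine le_antisymm ?_ (Filter.map_le_iff_le_comap.mp (hcont.tendsto x))
      intro U hU
      obtain ⟨U', hU'U, hU'open, hxU'⟩ := mem_nhds_iff.mp hU
      obtain ⟨V, hV, hxV, hVU⟩ := basis x U' hU'open hxU'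
      set χ : C(X, ℕ) := ⟨fun z => if z ∈ V then 1 else 0, clopen_indicator hV⟩
      refine Filter.mem_comap.mpr ⟨(fun r : C(X,ℕ) → ℕ => r χ) ⁻¹' {1}, ?_, ?_⟩
      · refine IsOpen.mem_nhds ((continuous_apply χ).isOpen_preimage _ (isOpen_discrete _)) ?_
        simp [he, χ, hxV]
      · intro z hz
        simp only [mem_preimage, mem_singleton_iff, he] at hz
        have hzV : z ∈ V := by
          by_contra hzV
          simp [χ, hzV] at hz
        exact hU'U (hVU hzV)
  refine ⟨C(X, ℕ), ⟨ContinuousMap.const X 0⟩, e, hemb, ?_⟩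
  rw [← closure_subset_iff_isClosed]
  intro p hp
  have approx : ∀ F : Finset C(X, ℕ), ∃ x : X, ∀ f ∈ F, f x = p f := by
    intro F
    obtain ⟨a, ⟨x, rfl⟩, ha⟩ := mem_closure_pi_nat.mp hp F
    exact ⟨x, fun f hf => ha f hf⟩
  set Z : C(X, ℕ) → Set X := fun f => {x | f x = p f} with hZ
  have hZclopen : ∀ f, IsClopen (Z f) := fun f =>
    ⟨IsClosed.preimage f.continuous (isClosed_discrete {p f}),
     IsOpen.preimage f.continuous (isOpen_discrete {p f})⟩
  by_cases hcase : ∀ F : Finset C(X, ℕ), (K ∩ ⋂ f ∈ F, Z f).Nonempty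
  · obtain ⟨x, _, hx⟩ := hK.inter_iInter_nonempty Z (fun f => (hZclopen f).1) hcase
    exact ⟨x, funext fun f => (mem_iInter.mp hx f : f x = p f).symm ▸ rfl⟩
  · push_neg at hcase
    obtain ⟨F₀, hF₀⟩ := hcase
    set A : Set X := ⋂ f ∈ F₀, Z f with hA
    have hAclopen : IsClopen A := isClopen_biInter_finset fun f _ => hZclopen f
    have hAS : A ⊆ S := by
      intro x hx
      have hxK : x ∉ K := fun hxK => by
        have : x ∈ K ∩ ⋂ f ∈ F₀, Z f := ⟨hxK, hx⟩
        rw [hF₀] at this; exact this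
      have hx2 : x ∈ S ∪ K := hUnion ▸ Set.mem_univ x
      rcases hx2 with h2 | h2
      · exact h2
      · exact absurd h2 hxK
    set g₀ : C(X, ℕ) := ⟨fun z => if z ∈ A then 1 else 0, clopen_indicator hAclopen⟩ with hg₀def
    have hmemA : ∀ x, x ∈ A ↔ ∀ f ∈ F₀, f x = p f := by
      intro x; simp [hA, Z]
    have hpg₀ : p g₀ = 1 := by
      obtain ⟨x, hx⟩ := approx (insert g₀ F₀)
      have hxA : x ∈ A := (hmemA x).mpr fun f hf => hx f (Finset.mem_insert_of_mem hf)
      have := hx g₀ (Finset.mem_insert_self _ _)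
      rw [← this]
      simp [g₀, hxA]
    obtain ⟨J', hJ', h, hhemb, hhclosed⟩ := hS
    have hinj : Function.Injective h := hhemb.injective
    have hclosedmap : IsClosedMap h := IsClosedEmbedding.isClosedMap ⟨hhemb, hhclosed⟩
    set ψ : J' → C(X, ℕ) := fun j' =>
      ⟨fun x => if hx : x ∈ A then h ⟨x, hAS hx⟩ j' else 0, by
        rw [continuous_iff_continuousAt]
        intro x
        by_cases hx : x ∈ A
        · refine ContinuousOn.continuousAt ?_ (hAclopen.2.mem_nhds hx)
          rw [continuousOn_iff_continuous_restrict]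
          have : A.domRestrict (fun x => if hx : x ∈ A then h ⟨x, hAS hx⟩ j' else 0)
              = fun y : A => h (Set.inclusion hAS y) j' := funext fun y => dif_pos y.2
          rw [this]
          exact ((continuous_apply j').comp hhemb.continuous).comp (continuous_inclusion hAS)
        · have hev : (fun x => if hx : x ∈ A then h ⟨x, hAS hx⟩ j' else 0) =ᶠ[𝓝 x]
              (fun _ => 0) :=
            Filter.eventually_of_mem (hAclopen.1.isOpen_compl.mem_nhds hx)
              (fun y hy => dif_neg hy)
          exact continuousAt_const.congr hev.symm⟩ with hψdef
    set q : J' → ℕ := fun j' => p (ψ j') with hq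
    have key : ∀ g : C(X, ℕ), ∃ s : ↥S, h s = q ∧ g ↑s = p g := by
      intro g
      set Zg : Set ↥S := {s : ↥S | g ↑s = p g ∧ ↑s ∈ A} with hZg
      have hZgclosed : IsClosed Zg := by
        apply IsClosed.inter
        · exact IsClosed.preimage (g.continuous.comp continuous_subtype_val)
            (isClosed_discrete {p g})
        · exact IsClosed.preimage continuous_subtype_val hAclopen.1
      have hcl : q ∈ closure (h '' Zg) := by
        rw [mem_closure_pi_nat]
        intro F'
        obtain ⟨x, hx⟩ := approx (insert g (insert g₀ (F'.image ψ)))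
        have hxA : x ∈ A := by
          have := hx g₀ (Finset.mem_insert_of_mem (Finset.mem_insert_self _ _))
          rw [hpg₀] at this
          by_contra hxA
          simp [g₀, hxA] at this
        have hxg : g x = p g := hx g (Finset.mem_insert_self _ _)
        refine ⟨h ⟨x, hAS hxA⟩, ⟨⟨x, hAS hxA⟩, ⟨hxg, hxA⟩, rfl⟩, ?_⟩
        intro j' hj'
        have hψx : ψ j' x = p (ψ j') := hx (ψ j')
          (Finset.mem_insert_of_mem (Finset.mem_insert_of_mem (Finset.mem_image_of_mem ψ hj')))
        have : ψ j' x = h ⟨x, hAS hxA⟩ j' := dif_pos hxA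
        rw [← this, hψx]
      have : q ∈ h '' Zg := (hclosedmap Zg hZgclosed).closure_subset hcl
      obtain ⟨s, hsZ, hsq⟩ := this
      exact ⟨s, hsq, hsZ.1⟩
    obtain ⟨s, hsq, _⟩ := key (ContinuousMap.const X 0)
    have hall : ∀ g : C(X, ℕ), g ↑s = p g := by
      intro g
      obtain ⟨s', hs'q, hs'g⟩ := key g
      rwa [hinj (hs'q.trans hsq.symm)] at hs'g
    exact ⟨s, funext fun g => hall g⟩

lemma part_real {X : Type u} [TopologicalSpace X] [T1Space X]
    (S K : Set X) (hUnion : S ∪ K = Set.univ) (hK : IsCompact K)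
    (hcr : CompletelyRegularSpace X) (hS : IsECompact ℝ ↥S) :
    IsECompact ℝ X := by
  classical
  set e : X → C(X, ℝ) → ℝ := fun x f => f x with he
  have hcont : Continuous e := continuous_pi fun f => f.continuous
  -- separation of points from closed complements via real-valued functions
  have sep : ∀ (x : X) (U : Set X), IsOpen U → x ∈ U →
      ∃ f : C(X, ℝ), f x = 0 ∧ ∀ y, y ∉ U → f y = 1 := by
    intro x U hU hxU
    obtain ⟨f, hfc, hfx, hfK⟩ := hcr.completely_regular x Uᶜ hU.isClosed_compl
      (by simpa using hxU)
    refine ⟨⟨fun z => (f z : ℝ), continuous_subtype_val.comp hfc⟩, ?_, ?_⟩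
    · simp [hfx]
    · intro y hy
      have := hfK (by simpa using hy)
      simp only [Pi.one_apply] at this
      simp [this]
  have hemb : IsEmbedding e := by
    refine IsEmbedding.mk' e ?_ ?_
    · intro x y hxy
      by_contra hne
      obtain ⟨f, hf0, hf1⟩ := sep x {y}ᶜ isClosed_singleton.isOpen_compl (by simpa using hne)
      have h1 : e x f = 0 := hf0
      have h2 : e y f = 1 := hf1 y (by simp)
      rw [hxy, h2] at h1
      exact one_ne_zero h1
    · intro x
      refine le_antisymm ?_ (Filter.map_le_iff_le_comap.mp (hcont.tendsto x))
      intro U hU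
      obtain ⟨U', hU'U, hU'open, hxU'⟩ := mem_nhds_iff.mp hU
      obtain ⟨f, hf0, hf1⟩ := sep x U' hU'open hxU'
      refine Filter.mem_comap.mpr ⟨(fun r : C(X,ℝ) → ℝ => r f) ⁻¹' (Set.Iio 1), ?_, ?_⟩
      · refine IsOpen.mem_nhds ((continuous_apply f).isOpen_preimage _ isOpen_Iio) ?_
        simp [he, hf0]
      · intro z hz
        simp only [mem_preimage, mem_Iio, he] at hz
        by_contra hzU
        have hz' : z ∉ U' := fun hz' => hzU (hU'U hz')
        rw [hf1 z hz'] at hz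
        exact lt_irrefl _ hz
  refine ⟨C(X, ℝ), ⟨ContinuousMap.const X 0⟩, e, hemb, ?_⟩
  rw [← closure_subset_iff_isClosed]
  intro p hp
  have approx : ∀ (F : Finset C(X, ℝ)) (ε : ℝ), 0 < ε → ∃ x : X, ∀ f ∈ F, |f x - p f| < ε := by
    intro F ε hε
    obtain ⟨a, ⟨x, rfl⟩, ha⟩ := mem_closure_pi_real.mp hp F ε hε
    exact ⟨x, fun f hf => ha f hf⟩
  set Z : C(X, ℝ) → Set X := fun f => {x | f x = p f} with hZ
  have hZclosed : ∀ f : C(X, ℝ), IsClosed (Z f) := fun f =>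
    IsClosed.preimage f.continuous isClosed_singleton
  by_cases hcase : ∀ F : Finset C(X, ℝ), (K ∩ ⋂ f ∈ F, Z f).Nonempty
  · obtain ⟨x, _, hx⟩ := hK.inter_iInter_nonempty Z hZclosed hcase
    exact ⟨x, funext fun f => (mem_iInter.mp hx f : f x = p f).symm ▸ rfl⟩
  · push_neg at hcase
    obtain ⟨F₀, hF₀⟩ := hcase
    set G : C(X, ℝ) := ∑ f ∈ F₀, (f - ContinuousMap.const X (p f)) ^ 2 with hGdef
    have hGapp : ∀ x, G x = ∑ f ∈ F₀, (f x - p f) ^ 2 := by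
      intro x
      simp [hGdef]
    have hGnonneg : ∀ x, 0 ≤ G x := fun x => by
      rw [hGapp]; exact Finset.sum_nonneg fun f _ => sq_nonneg _
    have hGzero : ∀ x, G x = 0 → ∀ f ∈ F₀, f x = p f := by
      intro x hx f hf
      rw [hGapp] at hx
      have := (Finset.sum_eq_zero_iff_of_nonneg (fun f _ => sq_nonneg (f x - p f))).mp hx f hf
      have := pow_eq_zero_iff (n := 2) (by norm_num) |>.mp this
      linarith [sub_eq_zero.mp this]
    -- p G = 0
    have hpG : p G = 0 := by
      have key : ∀ ε : ℝ, 0 < ε → ε ≤ 1 → |p G| < (F₀.card + 1) * ε := by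
        intro ε hε hε1
        obtain ⟨x, hx⟩ := approx (insert G F₀) ε hε
        have hGx : |G x - p G| < ε := hx G (Finset.mem_insert_self _ _)
        have hGxle : G x ≤ F₀.card * ε := by
          rw [hGapp]
          calc ∑ f ∈ F₀, (f x - p f) ^ 2 ≤ ∑ _f ∈ F₀, ε := by
                refine Finset.sum_le_sum fun f hf => ?_
                have h1 := hx f (Finset.mem_insert_of_mem hf)
                have h2 := abs_lt.mp h1
                nlinarith [h2.1, h2.2]
            _ = F₀.card * ε := by rw [Finset.sum_const, nsmul_eq_mul]
        have h3 := abs_lt.mp hGx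
        have h4 := hGnonneg x
        have hexp : ((F₀.card : ℝ) + 1) * ε = (F₀.card : ℝ) * ε + ε := by ring
        have hc0 : (0:ℝ) ≤ (F₀.card : ℝ) * ε := mul_nonneg (Nat.cast_nonneg _) hε.le
        rw [abs_lt]
        constructor <;> linarith
      by_contra h0
      have habs : 0 < |p G| := abs_pos.mpr h0
      have hcard0 : (0:ℝ) ≤ (F₀.card : ℝ) := Nat.cast_nonneg _
      have hden : (0:ℝ) < 2 * ((F₀.card : ℝ) + 1) := by linarith
      set ε := min 1 (|p G| / (2 * ((F₀.card : ℝ) + 1))) with hε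
      have hεpos : 0 < ε := lt_min one_pos (div_pos habs hden)
      have hk := key ε hεpos (min_le_left _ _)
      have hle : ((F₀.card : ℝ) + 1) * ε ≤ |p G| / 2 := by
        calc ((F₀.card : ℝ) + 1) * ε
            ≤ ((F₀.card : ℝ) + 1) * (|p G| / (2 * ((F₀.card : ℝ) + 1))) :=
              mul_le_mul_of_nonneg_left (min_le_right _ _) (by linarith)
          _ = |p G| / 2 := by
              rw [mul_div_assoc', mul_comm 2 ((F₀.card : ℝ) + 1),
                mul_div_mul_left _ _ (by linarith : ((F₀.card : ℝ) + 1) ≠ 0)]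
      linarith
    -- the positive lower bound on K
    obtain ⟨m, hm0, hmS⟩ : ∃ m : ℝ, 0 < m ∧ ∀ x, G x < m → x ∈ S := by
      rcases K.eq_empty_or_nonempty with hKe | hKne
      · refine ⟨1, one_pos, fun x _ => ?_⟩
        have hx2 : x ∈ S ∪ K := hUnion ▸ Set.mem_univ x
        rcases hx2 with h2 | h2
        · exact h2
        · rw [hKe] at h2; exact absurd h2 (Set.notMem_empty x)
      · obtain ⟨x₀, hx₀K, hx₀min⟩ := hK.exists_isMinOn hKne G.continuous.continuousOn
        have hGx₀ : G x₀ ≠ 0 := by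
          intro h0
          have hx₀mem : x₀ ∈ K ∩ ⋂ f ∈ F₀, Z f :=
            ⟨hx₀K, mem_iInter₂.mpr fun f hf => hGzero x₀ h0 f hf⟩
          rw [hF₀] at hx₀mem
          exact hx₀mem
        refine ⟨G x₀, lt_of_le_of_ne (hGnonneg x₀) (Ne.symm hGx₀), fun x hx => ?_⟩
        have hx2 : x ∈ S ∪ K := hUnion ▸ Set.mem_univ x
        rcases hx2 with h2 | h2
        · exact h2
        · exact absurd (hx₀min h2) (not_le.mpr hx)
    -- the bump function
    set t : X → ℝ := fun x => max 0 (min 1 (2 - 4 / m * G x)) with htdef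
    have htcont : Continuous t :=
      continuous_const.max (continuous_const.min
        (continuous_const.sub (continuous_const.mul G.continuous)))
    have ht1 : ∀ x, G x ≤ m / 4 → t x = 1 := by
      intro x hx
      have h4 : 4 / m * G x ≤ 1 := by
        rw [div_mul_eq_mul_div, div_le_one hm0]; linarith
      rw [htdef]
      simp only
      rw [min_eq_left (by linarith), max_eq_right zero_le_one]
    have ht0 : ∀ x, m / 2 ≤ G x → t x = 0 := by
      intro x hx
      have h4 : 2 ≤ 4 / m * G x := by
        rw [div_mul_eq_mul_div, le_div_iff₀ hm0]; linarith
      rw [htdef]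
      simp only
      rw [max_eq_left (le_trans (min_le_right _ _) (by linarith))]
    obtain ⟨J', hJ', h, hhemb, hhclosed⟩ := hS
    have hinj : Function.Injective h := hhemb.injective
    have hclosedmap : IsClosedMap h := IsClosedEmbedding.isClosedMap ⟨hhemb, hhclosed⟩
    have hψcont : ∀ j' : J',
        Continuous (fun x => if hx : x ∈ S then h ⟨x, hx⟩ j' * t x else 0) := by
      intro j'
      rw [continuous_iff_continuousAt]
      intro x
      by_cases hx : G x < m
      · have hU₁ : IsOpen (G ⁻¹' Set.Iio m) := G.continuous.isOpen_preimage _ isOpen_Iio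
        have hU₁S : G ⁻¹' Set.Iio m ⊆ S := fun y hy => hmS y hy
        refine ContinuousOn.continuousAt ?_ (hU₁.mem_nhds hx)
        rw [continuousOn_iff_continuous_restrict]
        have hrestr : (G ⁻¹' Set.Iio m).domRestrict
            (fun x => if hx : x ∈ S then h ⟨x, hx⟩ j' * t x else 0)
            = fun y : (G ⁻¹' Set.Iio m) => h (Set.inclusion hU₁S y) j' * t y := by
          funext y
          simp only [Set.domRestrict_apply, dif_pos (hU₁S y.2)]
        rw [hrestr]
        exact (((continuous_apply j').comp hhemb.continuous).comp
          (continuous_inclusion hU₁S)).mul (htcont.comp continuous_subtype_val)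
      · have hx2 : m / 2 < G x := by push_neg at hx; linarith
        have hU₂ : IsOpen (G ⁻¹' Set.Ioi (m / 2)) := G.continuous.isOpen_preimage _ isOpen_Ioi
        have hev : (fun x => if hx : x ∈ S then h ⟨x, hx⟩ j' * t x else 0) =ᶠ[𝓝 x]
            (fun _ => 0) := by
          refine Filter.eventually_of_mem (hU₂.mem_nhds hx2) fun y hy => ?_
          show (if hx : y ∈ S then h ⟨y, hx⟩ j' * t y else 0) = 0
          by_cases hyS : y ∈ S
          · rw [dif_pos hyS, ht0 y (le_of_lt hy), mul_zero]
          · rw [dif_neg hyS]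
        exact continuousAt_const.congr hev.symm
    set ψ : J' → C(X, ℝ) := fun j' =>
      ⟨fun x => if hx : x ∈ S then h ⟨x, hx⟩ j' * t x else 0, hψcont j'⟩ with hψdef
    set q : J' → ℝ := fun j' => p (ψ j') with hq
    have key : ∀ (g : C(X, ℝ)) (ε : ℝ), 0 < ε →
        ∃ s : ↥S, h s = q ∧ |g ↑s - p g| ≤ ε := by
      intro g ε hε
      set Zg : Set ↥S := {s : ↥S | |g ↑s - p g| ≤ ε ∧ G ↑s ≤ m / 4} with hZg
      have hZgclosed : IsClosed Zg := by
        apply IsClosed.inter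
        · exact isClosed_Iic.preimage
            (((g.continuous.comp continuous_subtype_val).sub continuous_const).abs)
        · exact isClosed_Iic.preimage (G.continuous.comp continuous_subtype_val)
      have hcl : q ∈ closure (h '' Zg) := by
        rw [mem_closure_pi_real]
        intro F' ε' hε'
        set δ : ℝ := min ε' (min ε (m / 4)) with hδ
        have hδpos : 0 < δ := lt_min hε' (lt_min hε (by positivity))
        obtain ⟨x, hx⟩ := approx (insert g (insert G (F'.image ψ))) δ hδpos
        have hGx : |G x - p G| < δ :=
          hx G (Finset.mem_insert_of_mem (Finset.mem_insert_self _ _))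
        rw [hpG, sub_zero] at hGx
        have hGx4 : G x ≤ m / 4 := by
          have := (abs_lt.mp hGx).2
          have hδ4 : δ ≤ m / 4 := le_trans (min_le_right _ _) (min_le_right _ _)
          linarith
        have hxS : x ∈ S := hmS x (by linarith)
        have htx : t x = 1 := ht1 x hGx4
        have hxg : |g x - p g| < δ := hx g (Finset.mem_insert_self _ _)
        refine ⟨h ⟨x, hxS⟩, ⟨⟨x, hxS⟩, ⟨?_, hGx4⟩, rfl⟩, ?_⟩
        · exact le_of_lt (lt_of_lt_of_le hxg (le_trans (min_le_right _ _) (min_le_left _ _)))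
        · intro j' hj'
          have hψx : |ψ j' x - p (ψ j')| < δ := hx (ψ j')
            (Finset.mem_insert_of_mem (Finset.mem_insert_of_mem (Finset.mem_image_of_mem ψ hj')))
          have heq : ψ j' x = h ⟨x, hxS⟩ j' := by
            show (if hx : x ∈ S then h ⟨x, hx⟩ j' * t x else 0) = h ⟨x, hxS⟩ j'
            rw [dif_pos hxS, htx, mul_one]
          rw [← heq]
          exact lt_of_lt_of_le hψx (min_le_left _ _)
      have hmem : q ∈ h '' Zg := (hclosedmap Zg hZgclosed).closure_subset hcl
      obtain ⟨s, hsZ, hsq⟩ := hmem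
      exact ⟨s, hsq, hsZ.1⟩
    obtain ⟨s, hsq, -⟩ := key (ContinuousMap.const X 0) 1 one_pos
    have hall : ∀ g : C(X, ℝ), g ↑s = p g := by
      intro g
      have hle : ∀ ε : ℝ, 0 < ε → |g ↑s - p g| ≤ 0 + ε := by
        intro ε hε
        obtain ⟨s', h1, h2⟩ := key g ε hε
        rw [hinj (h1.trans hsq.symm)] at h2
        linarith
      have := le_of_forall_pos_le_add hle
      have h0 : |g ↑s - p g| = 0 := le_antisymm this (abs_nonneg _)
      have := abs_eq_zero.mp h0
      linarith [sub_eq_zero.mp this]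
    exact ⟨s, funext fun g => hall g⟩

/-- Let `X` be a `T₁` space with `X = S ∪ K`, where `K` is compact in `X`.
(i) If `X` is completely regular and the subspace `S` is realcompact, then `X` is
realcompact.  (ii) If `X` is zero-dimensional and the subspace `S` is `ℕ`-compact,
then `X` is `ℕ`-compact. -/
theorem stmt13 {X : Type u} [TopologicalSpace X] [T1Space X]
    (S K : Set X) (hUnion : S ∪ K = Set.univ) (hK : IsCompact K) :
    (CompletelyRegularSpace X → IsECompact ℝ ↥S → IsECompact ℝ X) ∧
    (IsTopologicalBasis {s : Set X | IsClopen s} → IsECompact ℕ ↥S → IsECompact ℕ X) :=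
  ⟨fun hcr hS => part_real S K hUnion hK hcr hS,
   fun hzd hS => part_nat S K hUnion hK hzd hS⟩
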